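/- Union lemma for d⁺: if A₁,…,A_K are pairwise disjoint finite nonempty sets of reals, then d⁺(⋃ⱼ Aⱼ) ≤ |⋃ⱼ Aⱼ|⁻¹ · (Σⱼ d⁺(Aⱼ)^{1/3}|Aⱼ|^{1/3})³, where d⁺(A) = sup over finite nonempty B ⊂ ℝ of E₃⁺(A,B)/(|A||B|²). -/

import Mathlib

open Finset Pointwise BigOperators

noncomputable section

/-- number of pairs (a,b) ∈ A×B with a - b = x -/
def rsub (A B : Finset ℝ) (x : ℝ) : ℕ :=
  ((A ×ˢ B).filter (fun p => p.1 - p.2 = x)).card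

/-- number of pairs (a,b) ∈ A×B with a = x*b -/
def rdiv (A B : Finset ℝ) (x : ℝ) : ℕ :=
  ((A ×ˢ B).filter (fun p => p.1 = x * p.2)).card

/-- additive energy E⁺(A,B) = Σ_x r_{A−B}(x)² -/
def Eplus (A B : Finset ℝ) : ℕ := ∑ x ∈ A - B, (rsub A B x) ^ 2

/-- multiplicative energy E^×(A,B) = Σ_x r_{A/B}(x)² -/
def Etimes (A B : Finset ℝ) : ℕ := ∑ x ∈ A / B, (rdiv A B x) ^ 2

/-- third additive energy -/
def E3plus (A B : Finset ℝ) : ℕ := ∑ x ∈ A - B, (rsub A B x) ^ 3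

/-- third multiplicative energy -/
def E3times (A B : Finset ℝ) : ℕ := ∑ x ∈ A / B, (rdiv A B x) ^ 3

/-- fourth additive energy -/
def E4plus (A B : Finset ℝ) : ℕ := ∑ x ∈ A - B, (rsub A B x) ^ 4

/-- d⁺(A) -/
def dplus (A : Finset ℝ) : ℝ :=
  ⨆ B : {B : Finset ℝ // B.Nonempty}, (E3plus A B.1 : ℝ) / (A.card * (B.1.card : ℝ) ^ 2)

/-- d^×(A) -/
def dtimes (A : Finset ℝ) : ℝ :=
  ⨆ B : {B : Finset ℝ // B.Nonempty}, (E3times A B.1 : ℝ) / (A.card * (B.1.card : ℝ) ^ 2)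

/-- d₄⁺(A) -/
def d4plus (A : Finset ℝ) : ℝ :=
  ⨆ B : {B : Finset ℝ // B.Nonempty}, (E4plus A B.1 : ℝ) / (A.card * (B.1.card : ℝ) ^ 3)

section Aux

open Finset Pointwise

private lemma rsub_le_cardA (A B : Finset ℝ) (x : ℝ) : rsub A B x ≤ A.card := by
  unfold rsub
  apply Finset.card_le_card_of_injOn Prod.fst
  · intro p hp
    simp only [Finset.mem_coe, Finset.mem_filter, Finset.mem_product] at hp
    exact hp.1.1
  · intro p hp q hq h
    simp only [Finset.coe_filter, Set.mem_setOf_eq, Finset.mem_product] at hp hq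
    have h2 : p.2 = q.2 := by
      have := hp.2; have := hq.2
      have : p.1 - p.2 = q.1 - q.2 := by rw [hp.2, hq.2]
      rw [h] at this; linarith
    exact Prod.ext h h2

private lemma sum_rsub (A B : Finset ℝ) :
    ∑ x ∈ A - B, rsub A B x = A.card * B.card := by
  classical
  rw [← Finset.card_product]
  exact (Finset.card_eq_sum_card_fiberwise
    (f := fun p : ℝ × ℝ => p.1 - p.2) (t := A - B)
    (fun p hp => by
      simp only [Finset.mem_coe, Finset.mem_product] at hp
      exact Finset.sub_mem_sub hp.1 hp.2)).symm

private lemma E3plus_le (A B : Finset ℝ) :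
    E3plus A B ≤ A.card ^ 2 * (A.card * B.card) := by
  unfold E3plus
  calc ∑ x ∈ A - B, (rsub A B x) ^ 3
      ≤ ∑ x ∈ A - B, A.card ^ 2 * rsub A B x := by
        apply Finset.sum_le_sum
        intro x _
        calc (rsub A B x) ^ 3 = (rsub A B x) ^ 2 * rsub A B x := by ring
          _ ≤ A.card ^ 2 * rsub A B x :=
            Nat.mul_le_mul_right _ (Nat.pow_le_pow_left (rsub_le_cardA A B x) 2)
    _ = A.card ^ 2 * (A.card * B.card) := by rw [← Finset.mul_sum, sum_rsub]

private lemma dplus_bdd (A : Finset ℝ) :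
    BddAbove (Set.range fun B : {B : Finset ℝ // B.Nonempty} =>
      (E3plus A B.1 : ℝ) / (A.card * (B.1.card : ℝ) ^ 2)) := by
  refine ⟨(A.card : ℝ) ^ 2, ?_⟩
  rintro y ⟨B, rfl⟩
  rcases B with ⟨B, hB⟩
  simp only
  rcases Nat.eq_zero_or_pos A.card with h | h
  · simp [h]
  · have hb : 0 < (B.card : ℝ) := by
      have := Finset.card_pos.mpr hB; positivity
    have ha : 0 < (A.card : ℝ) := by positivity
    rw [div_le_iff₀ (by positivity)]
    have h1 : (E3plus A B : ℝ) ≤ (A.card : ℝ) ^ 2 * ((A.card : ℝ) * B.card) := by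
      have := E3plus_le A B
      calc (E3plus A B : ℝ) ≤ ((A.card ^ 2 * (A.card * B.card) : ℕ) : ℝ) := by
            exact_mod_cast this
        _ = (A.card : ℝ) ^ 2 * ((A.card : ℝ) * B.card) := by push_cast; ring
    have h2 : (A.card : ℝ) * B.card ≤ (A.card : ℝ) * (B.card : ℝ) ^ 2 := by
      have hb1 : (1 : ℝ) ≤ (B.card : ℝ) := by
        exact_mod_cast Nat.one_le_iff_ne_zero.mpr (Finset.card_ne_zero_of_mem (hB.choose_spec))
      have hbb : (B.card : ℝ) ≤ (B.card : ℝ) ^ 2 := by nlinarith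
      exact mul_le_mul_of_nonneg_left hbb ha.le
    nlinarith

private lemma dplus_nonneg (A : Finset ℝ) : 0 ≤ dplus A := by
  apply Real.iSup_nonneg
  intro B
  positivity

private lemma E3plus_le_dplus (A B : Finset ℝ) (hA : A.Nonempty) (hB : B.Nonempty) :
    (E3plus A B : ℝ) ≤ dplus A * A.card * (B.card : ℝ) ^ 2 := by
  have h := le_ciSup (dplus_bdd A) (⟨B, hB⟩ : {B : Finset ℝ // B.Nonempty})
  have ha : 0 < (A.card : ℝ) := by exact_mod_cast Finset.card_pos.mpr hA
  have hb : 0 < (B.card : ℝ) := by exact_mod_cast Finset.card_pos.mpr hB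
  have hpos : 0 < (A.card : ℝ) * (B.card : ℝ) ^ 2 := by positivity
  rw [div_le_iff₀ hpos] at h
  calc (E3plus A B : ℝ) ≤ dplus A * ((A.card : ℝ) * (B.card : ℝ) ^ 2) := h
    _ = dplus A * A.card * (B.card : ℝ) ^ 2 := by ring

/-- K-fold Minkowski inequality for p = 3. -/
private lemma minkowski3 {ι κ : Type*} (t : Finset κ) (s : Finset ι) (f : ι → κ → ℝ)
    (hf : ∀ i x, 0 ≤ f i x) :
    (∑ x ∈ t, (∑ i ∈ s, f i x) ^ (3 : ℝ)) ^ ((1:ℝ)/3) ≤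
      ∑ i ∈ s, (∑ x ∈ t, f i x ^ (3 : ℝ)) ^ ((1:ℝ)/3) := by
  classical
  induction s using Finset.induction with
  | empty => simp [Real.zero_rpow (by norm_num : (3:ℝ) ≠ 0)]
  | @insert a s ha ih =>
    rw [Finset.sum_insert ha]
    calc (∑ x ∈ t, (∑ i ∈ insert a s, f i x) ^ (3 : ℝ)) ^ ((1:ℝ)/3)
        = (∑ x ∈ t, (f a x + ∑ i ∈ s, f i x) ^ (3 : ℝ)) ^ ((1:ℝ)/3) := by
          congr 1
          exact Finset.sum_congr rfl fun x _ => by rw [Finset.sum_insert ha]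
      _ ≤ (∑ x ∈ t, f a x ^ (3:ℝ)) ^ ((1:ℝ)/3) +
          (∑ x ∈ t, (∑ i ∈ s, f i x) ^ (3:ℝ)) ^ ((1:ℝ)/3) :=
          Real.Lp_add_le_of_nonneg t (by norm_num)
            (fun x _ => hf a x)
            (fun x _ => Finset.sum_nonneg fun i _ => hf i x)
      _ ≤ (∑ x ∈ t, f a x ^ (3:ℝ)) ^ ((1:ℝ)/3) +
          ∑ i ∈ s, (∑ x ∈ t, f i x ^ (3:ℝ)) ^ ((1:ℝ)/3) := by linarith

end Aux
theorem stmt6 (K : ℕ) (A : Fin K → Finset ℝ)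
    (hne : ∀ j, (A j).Nonempty)
    (hdisj : ∀ i j, i ≠ j → Disjoint (A i) (A j)) :
    dplus (Finset.univ.biUnion A) ≤
      ((Finset.univ.biUnion A).card : ℝ)⁻¹ *
        (∑ j : Fin K, dplus (A j) ^ ((1:ℝ)/3) * ((A j).card : ℝ) ^ ((1:ℝ)/3)) ^ 3 := by
  classical
  set U := Finset.univ.biUnion A with hU
  set S := ∑ j : Fin K, dplus (A j) ^ ((1:ℝ)/3) * ((A j).card : ℝ) ^ ((1:ℝ)/3) with hSdef
  have hS : 0 ≤ S := Finset.sum_nonneg fun j _ => by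
    have := dplus_nonneg (A j); positivity
  have hrsub : ∀ (B : Finset ℝ) (x : ℝ),
      rsub U B x = ∑ j : Fin K, rsub (A j) B x := by
    intro B x
    unfold rsub
    have hset : ((U) ×ˢ B).filter (fun p => p.1 - p.2 = x)
        = Finset.univ.biUnion (fun j => ((A j) ×ˢ B).filter (fun p => p.1 - p.2 = x)) := by
      ext p
      simp only [hU, Finset.mem_filter, Finset.mem_product, Finset.mem_biUnion,
        Finset.mem_univ, true_and]
      tauto
    rw [hset, Finset.card_biUnion]
    intro i _ j _ hij
    rw [Function.onFun, Finset.disjoint_left]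
    intro p hpi hpj
    simp only [Finset.mem_filter, Finset.mem_product] at hpi hpj
    exact Finset.disjoint_left.mp (hdisj i j hij) hpi.1.1 hpj.1.1
  have hE3j : ∀ (B : Finset ℝ) (j : Fin K),
      E3plus (A j) B = ∑ x ∈ U - B, (rsub (A j) B x) ^ 3 := by
    intro B j
    unfold E3plus
    apply Finset.sum_subset
    · exact Finset.sub_subset_sub
        (Finset.subset_biUnion_of_mem A (Finset.mem_univ j)) Finset.Subset.rfl
    · intro x _ hx
      have hz : rsub (A j) B x = 0 := by
        unfold rsub
        rw [Finset.card_eq_zero, Finset.filter_eq_empty_iff]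
        intro p hp
        simp only [Finset.mem_product] at hp
        intro h
        exact hx (h ▸ Finset.sub_mem_sub hp.1 hp.2)
      simp [hz]
  haveI : Nonempty {B : Finset ℝ // B.Nonempty} :=
    ⟨⟨{0}, Finset.singleton_nonempty 0⟩⟩
  apply ciSup_le
  rintro ⟨B, hB⟩
  simp only
  rcases Nat.eq_zero_or_pos U.card with hK | hK
  · have hUe : U = ∅ := Finset.card_eq_zero.mp hK
    have hE : E3plus U B = 0 := by
      unfold E3plus
      rw [hUe]
      simp
    rw [hE, hK]
    simp
  · have hn : (0:ℝ) < (U.card : ℝ) := by exact_mod_cast hK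
    have hb : (0:ℝ) < (B.card : ℝ) := by exact_mod_cast Finset.card_pos.mpr hB
    -- key estimate
    have h3 : (3:ℝ) = ((3:ℕ):ℝ) := by norm_num
    have hcube : ∀ y : ℝ, 0 ≤ y → y ^ (3:ℝ) = y ^ (3:ℕ) := fun y _ => by
      rw [h3, Real.rpow_natCast]
    have hE3U : (E3plus U B : ℝ)
        = ∑ x ∈ U - B, (∑ j : Fin K, (rsub (A j) B x : ℝ)) ^ (3:ℝ) := by
      unfold E3plus
      push_cast
      refine Finset.sum_congr rfl fun x _ => ?_
      rw [hcube _ (Finset.sum_nonneg fun j _ => by positivity)]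
      congr 1
      rw [hrsub B x]
      exact Nat.cast_sum _ _
    have hmink := minkowski3 (U - B) (Finset.univ : Finset (Fin K))
      (fun j x => (rsub (A j) B x : ℝ)) (fun j x => by positivity)
    rw [← hE3U] at hmink
    have hterm : ∀ j : Fin K,
        (∑ x ∈ U - B, ((rsub (A j) B x : ℝ)) ^ (3:ℝ)) ^ ((1:ℝ)/3)
          ≤ dplus (A j) ^ ((1:ℝ)/3) * ((A j).card : ℝ) ^ ((1:ℝ)/3)
            * ((B.card : ℝ) ^ 2) ^ ((1:ℝ)/3) := by
      intro j
      have hsum : ∑ x ∈ U - B, ((rsub (A j) B x : ℝ)) ^ (3:ℝ) = (E3plus (A j) B : ℝ) := by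
        rw [hE3j B j]
        push_cast
        exact Finset.sum_congr rfl fun x _ => hcube _ (by positivity)
      rw [hsum]
      have hle : (E3plus (A j) B : ℝ) ≤ dplus (A j) * (A j).card * (B.card : ℝ) ^ 2 :=
        E3plus_le_dplus (A j) B (hne j) hB
      calc (E3plus (A j) B : ℝ) ^ ((1:ℝ)/3)
          ≤ (dplus (A j) * (A j).card * (B.card : ℝ) ^ 2) ^ ((1:ℝ)/3) :=
            Real.rpow_le_rpow (by positivity) hle (by norm_num)
        _ = dplus (A j) ^ ((1:ℝ)/3) * ((A j).card : ℝ) ^ ((1:ℝ)/3)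
            * ((B.card : ℝ) ^ 2) ^ ((1:ℝ)/3) := by
            rw [Real.mul_rpow (mul_nonneg (dplus_nonneg (A j)) (Nat.cast_nonneg _))
              (by positivity), Real.mul_rpow (dplus_nonneg (A j)) (Nat.cast_nonneg _)]
    have hmink2 : (E3plus U B : ℝ) ^ ((1:ℝ)/3) ≤ S * ((B.card : ℝ) ^ 2) ^ ((1:ℝ)/3) := by
      calc (E3plus U B : ℝ) ^ ((1:ℝ)/3)
          ≤ ∑ j : Fin K, (∑ x ∈ U - B, ((rsub (A j) B x : ℝ)) ^ (3:ℝ)) ^ ((1:ℝ)/3) := hmink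
        _ ≤ ∑ j : Fin K, dplus (A j) ^ ((1:ℝ)/3) * ((A j).card : ℝ) ^ ((1:ℝ)/3)
              * ((B.card : ℝ) ^ 2) ^ ((1:ℝ)/3) :=
            Finset.sum_le_sum fun j _ => hterm j
        _ = S * ((B.card : ℝ) ^ 2) ^ ((1:ℝ)/3) := by rw [hSdef, Finset.sum_mul]
    have hkey : (E3plus U B : ℝ) ≤ S ^ 3 * (B.card : ℝ) ^ 2 := by
      have h1 := pow_le_pow_left₀ (Real.rpow_nonneg (Nat.cast_nonneg _) _) hmink2 3
      have h2 : ((E3plus U B : ℝ) ^ ((1:ℝ)/3)) ^ (3:ℕ) = (E3plus U B : ℝ) := by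
        rw [← Real.rpow_natCast ((E3plus U B : ℝ) ^ ((1:ℝ)/3)) 3,
          ← Real.rpow_mul (by positivity)]
        norm_num
      have h4 : (((B.card : ℝ) ^ 2) ^ ((1:ℝ)/3)) ^ (3:ℕ) = (B.card : ℝ) ^ 2 := by
        rw [← Real.rpow_natCast (((B.card : ℝ) ^ 2) ^ ((1:ℝ)/3)) 3,
          ← Real.rpow_mul (by positivity)]
        norm_num
      calc (E3plus U B : ℝ)
          = ((E3plus U B : ℝ) ^ ((1:ℝ)/3)) ^ (3:ℕ) := h2.symm
        _ ≤ (S * ((B.card : ℝ) ^ 2) ^ ((1:ℝ)/3)) ^ (3:ℕ) := h1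
        _ = S ^ 3 * (((B.card : ℝ) ^ 2) ^ ((1:ℝ)/3)) ^ (3:ℕ) := by ring
        _ = S ^ 3 * (B.card : ℝ) ^ 2 := by rw [h4]
    rw [div_le_iff₀ (by positivity)]
    have : ((U.card : ℝ))⁻¹ * S ^ 3 * ((U.card : ℝ) * (B.card : ℝ) ^ 2)
        = S ^ 3 * (B.card : ℝ) ^ 2 := by
      field_simp
    rw [this]
    exact hkey
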